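/- Let G be a connected simple graph on n ≥ 5 vertices. If sdiam_4(G) = 3, then the complement of G contains no 4-cycle as a subgraph. -/

import Mathlib

open SimpleGraph

variable {V : Type*}

/-- The set of non-cut vertices of a graph: vertices whose deletion leaves the
graph (induced on the remaining vertices) connected. -/
def noncutVerts (G : SimpleGraph V) : Set V :=
  {v | (G.induce ({v}ᶜ : Set V)).Connected}

/-- The Steiner distance of a finite vertex set `S`: the minimum number of edges
of a connected subgraph of `G` whose vertex set contains `S`. -/
noncomputable def steinerDist [Fintype V] (G : SimpleGraph V) (S : Finset V) : ℕ :=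
  sInf {m | ∃ H : G.Subgraph, H.Connected ∧ ↑S ⊆ H.verts ∧ H.edgeSet.ncard = m}

/-- The Steiner `k`-diameter of `G`: the maximum Steiner distance over all
`k`-element subsets of the vertex set. -/
noncomputable def sdiam [Fintype V] (G : SimpleGraph V) (k : ℕ) : ℕ :=
  (Finset.powersetCard k (Finset.univ : Finset V)).sup (fun S => steinerDist G S)

lemma exists_adj_dist_lt {W : Type*} (H : SimpleGraph W) (hc : H.Connected) {w v0 : W}
    (hne : w ≠ v0) : ∃ x, H.Adj w x ∧ H.dist x v0 < H.dist w v0 := by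
  have hd : H.dist w v0 ≠ 0 := by
    rw [SimpleGraph.dist_ne_zero_iff_ne_and_reachable]
    exact ⟨hne, hc w v0⟩
  obtain ⟨p, hp⟩ := SimpleGraph.exists_walk_of_dist_ne_zero hd
  cases p with
  | nil => exact absurd rfl hne
  | cons hadj q =>
    refine ⟨_, hadj, ?_⟩
    have := SimpleGraph.dist_le q
    simp [SimpleGraph.Walk.length_cons] at hp
    omega

lemma card_le_ncard_edges {W : Type*} [Fintype W] (H : SimpleGraph W)
    (hc : H.Connected) : Fintype.card W ≤ H.edgeSet.ncard + 1 := by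
  classical
  obtain ⟨v0⟩ := hc.nonempty
  choose x hadj hlt using fun (w : {w : W // w ≠ v0}) => exists_adj_dist_lt H hc w.2
  have hinj : Function.Injective (fun w : {w : W // w ≠ v0} =>
      (⟨s(w.1, x w), (hadj w)⟩ : H.edgeSet)) := by
    intro a b hab
    simp only [Subtype.mk.injEq, Sym2.eq_iff] at hab
    rcases Sym2.eq_iff.mp (congrArg Subtype.val hab) with ⟨h1, h2⟩ | ⟨h1, h2⟩
    · exact Subtype.ext h1
    · exfalso
      have ha := hlt a
      have hb := hlt b
      rw [h2] at ha
      rw [← h1] at hb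
      omega
  have hle := Nat.card_le_card_of_injective _ hinj
  have h1 : Nat.card {w : W // w ≠ v0} = Fintype.card W - 1 := by
    rw [Nat.card_eq_fintype_card]
    simp [Fintype.card_subtype_compl]
  simp only [Nat.card_coe_set_eq] at hle
  have h3 : 1 ≤ Fintype.card W := @Fintype.card_pos _ _ ⟨v0⟩
  omega


theorem stmt_8 [Fintype V] (G : SimpleGraph V)
    (hn : 5 ≤ Fintype.card V) (hG : G.Connected) (h : sdiam G 4 = 3) :
    ¬ ∃ u₁ u₂ u₃ u₄ : V, u₁ ≠ u₂ ∧ u₁ ≠ u₃ ∧ u₁ ≠ u₄ ∧ u₂ ≠ u₃ ∧ u₂ ≠ u₄ ∧ u₃ ≠ u₄ ∧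
      ¬ G.Adj u₁ u₂ ∧ ¬ G.Adj u₂ u₃ ∧ ¬ G.Adj u₃ u₄ ∧ ¬ G.Adj u₄ u₁ := by
  classical
  rintro ⟨u₁, u₂, u₃, u₄, h12, h13, h14, h23, h24, h34, n12, n23, n34, n41⟩
  set S : Finset V := {u₁, u₂, u₃, u₄} with hS
  have hScard : S.card = 4 := by
    rw [hS]
    rw [Finset.card_insert_of_notMem (by simp [h12, h13, h14]),
        Finset.card_insert_of_notMem (by simp [h23, h24]),
        Finset.card_insert_of_notMem (by simp [h34]), Finset.card_singleton]
  have hmem : S ∈ Finset.powersetCard 4 (Finset.univ : Finset V) := by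
    simp [Finset.mem_powersetCard_univ, hScard]
  have hle : steinerDist G S ≤ 3 := h ▸ Finset.le_sup hmem
  have htop : (⊤ : G.Subgraph).Connected := by
    rw [SimpleGraph.Subgraph.connected_iff']
    exact (Iso.connected_iff (Subgraph.topIso)).mpr hG
  have hne : {m | ∃ H : G.Subgraph, H.Connected ∧ ↑S ⊆ H.verts ∧ H.edgeSet.ncard = m}.Nonempty := by
    refine ⟨(⊤ : G.Subgraph).edgeSet.ncard, ⊤, htop, ?_, rfl⟩
    exact fun x _ => trivial
  have hmem' : steinerDist G S ∈
      {m | ∃ H : G.Subgraph, H.Connected ∧ ↑S ⊆ H.verts ∧ H.edgeSet.ncard = m} :=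
    Nat.sInf_mem hne
  obtain ⟨H, hHc, hHS, hHcard⟩ := hmem'
  have hfin : Fintype H.verts := Set.Finite.fintype (Set.toFinite _)
  have hvle : Fintype.card H.verts ≤ H.coe.edgeSet.ncard + 1 :=
    card_le_ncard_edges H.coe hHc.coe
  have hecard : H.coe.edgeSet.ncard = H.edgeSet.ncard := by
    rw [← Subgraph.image_coe_edgeSet_coe H,
      Set.ncard_image_of_injective _ (Sym2.map.injective Subtype.coe_injective)]
  have hvcard : Fintype.card H.verts = H.verts.ncard := by
    rw [Set.ncard_eq_toFinset_card', Set.toFinset_card]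
  have h4 : 4 ≤ H.verts.ncard := by
    have := Set.ncard_le_ncard hHS (Set.toFinite _)
    rwa [Set.ncard_coe_finset, hScard] at this
  have hverts : H.verts = ↑S := by
    apply (Set.eq_of_subset_of_ncard_le hHS ?_ (Set.toFinite _)).symm
    rw [Set.ncard_coe_finset, hScard]
    omega
  -- every edge of H lies in {s(u₁,u₃), s(u₂,u₄)}
  have n21 : ¬ G.Adj u₂ u₁ := fun hx => n12 hx.symm
  have n32 : ¬ G.Adj u₃ u₂ := fun hx => n23 hx.symm
  have n43 : ¬ G.Adj u₄ u₃ := fun hx => n34 hx.symm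
  have n14 : ¬ G.Adj u₁ u₄ := fun hx => n41 hx.symm
  have hsub : H.edgeSet ⊆ {s(u₁, u₃), s(u₂, u₄)} := by
    intro e he
    induction e using Sym2.ind with
    | _ a b =>
      have hAdj : H.Adj a b := he
      have ha : a ∈ H.verts := H.edge_vert hAdj
      have hb : b ∈ H.verts := H.edge_vert hAdj.symm
      rw [hverts] at ha hb
      have hGab : G.Adj a b := hAdj.adj_sub
      simp only [hS, Finset.coe_insert, Finset.coe_singleton, Set.mem_insert_iff,
        Set.mem_singleton_iff] at ha hb
      rcases ha with rfl | rfl | rfl | rfl <;> rcases hb with rfl | rfl | rfl | rfl <;>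
        first
          | exact absurd hGab n12 | exact absurd hGab n21
          | exact absurd hGab n23 | exact absurd hGab n32
          | exact absurd hGab n34 | exact absurd hGab n43
          | exact absurd hGab n41 | exact absurd hGab n14
          | exact absurd rfl (G.ne_of_adj hGab)
          | exact Set.mem_insert _ _
          | exact Set.mem_insert_iff.mpr (Or.inl Sym2.eq_swap)
          | exact Set.mem_insert_of_mem _ (Set.mem_singleton _)  -- direct
          | exact Set.mem_insert_iff.mpr (Or.inr (Set.mem_singleton_iff.mpr Sym2.eq_swap))
  have hle2 : H.edgeSet.ncard ≤ 2 := by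
    have := Set.ncard_le_ncard hsub (by
      apply Set.Finite.insert; exact Set.finite_singleton _)
    calc H.edgeSet.ncard ≤ ({s(u₁, u₃), s(u₂, u₄)} : Set (Sym2 V)).ncard := this
      _ ≤ 2 := by
        apply le_trans (Set.ncard_insert_le _ _)
        simp
  omega
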